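/- For 0 < α < 1/2 and k ≥ 1, the function g(k,α) = ∑_{l=0}^∞ ((1-2α)/(1-α))·(α/(1-α))^l · [ ∑_{n=0}^{k+l} C(n+k-1,n)·α^k·(1-α)^n + ∑_{n=k+l+1}^∞ C(n+k-1,n)·α^{n-l}·(1-α)^{k+l} ] satisfies 0 < g(k,α) < 1 and g(k,α) → 0 as k → ∞. -/

import Mathlib

open Finset Filter

/-- The Vector76 bound
`g(k,α) = ∑_{l=0}^∞ p_l · [∑_{n=0}^{k+l} C(n+k-1,n) α^k (1-α)^n
  + ∑_{n=k+l+1}^∞ C(n+k-1,n) α^{n-l} (1-α)^{k+l}]`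
with `p_l = ((1-2α)/(1-α))·(α/(1-α))^l`. -/
noncomputable def g (k : ℕ) (α : ℝ) : ℝ :=
  ∑' l : ℕ, ((1 - 2*α)/(1 - α)) * (α/(1 - α))^l *
    ((∑ n ∈ range (k + l + 1), (Nat.choose (n + k - 1) n : ℝ) * α^k * (1 - α)^n) +
     (∑' j : ℕ, (Nat.choose ((j + (k + l + 1)) + k - 1) (j + (k + l + 1)) : ℝ) *
        α^((j + (k + l + 1)) - l) * (1 - α)^(k + l)))

private lemma choose_le_two_pow' (n k : ℕ) : n.choose k ≤ 2 ^ n := by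
  rcases le_or_gt k n with h | h
  · calc n.choose k ≤ ∑ m ∈ range (n+1), n.choose m :=
        Finset.single_le_sum (fun i _ => Nat.zero_le _) (mem_range.2 (by omega))
    _ = 2 ^ n := Nat.sum_range_choose n
  · simp [Nat.choose_eq_zero_of_lt h]

private lemma negbin_hasSum (m : ℕ) {x : ℝ} (h0 : 0 ≤ x) (h1 : x < 1) :
    HasSum (fun n : ℕ => ((n + m).choose n : ℝ) * x ^ n) (1 / (1 - x) ^ (m + 1)) := by
  have h := hasSum_choose_mul_geometric_of_norm_lt_one (𝕜 := ℝ) m (r := x)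
    (by rwa [Real.norm_eq_abs, abs_of_nonneg h0])
  convert h using 2 with n
  · rfl
  rw [Nat.choose_symm_add]

private noncomputable def T (α : ℝ) (m : ℕ) (n : ℕ) : ℝ :=
  ((n + m).choose n : ℝ) * α ^ (m + 1) * (1 - α) ^ n

private lemma hasSum_T {α : ℝ} (hα0 : 0 < α) (hα : α < 1/2) (m : ℕ) :
    HasSum (T α m) 1 := by
  have hβ0 : (0:ℝ) ≤ 1 - α := by linarith
  have hβ1 : 1 - α < 1 := by linarith
  have h := (negbin_hasSum m hβ0 hβ1).mul_left (α ^ (m+1))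
  have hx : (1 : ℝ) - (1 - α) = α := by ring
  rw [hx] at h
  have heq : α ^ (m+1) * (1 / α ^ (m+1)) = 1 := by
    field_simp
  rw [heq] at h
  convert h using 2 with n
  · rfl
  simp only [T]; ring

private noncomputable def Fb (α : ℝ) (k l : ℕ) : ℝ :=
  (∑ n ∈ range (k + l + 1), (Nat.choose (n + k - 1) n : ℝ) * α^k * (1 - α)^n) +
  (∑' j : ℕ, (Nat.choose ((j + (k + l + 1)) + k - 1) (j + (k + l + 1)) : ℝ) *
      α^((j + (k + l + 1)) - l) * (1 - α)^(k + l))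

private lemma g_eq (k : ℕ) (α : ℝ) :
    g k α = ∑' l : ℕ, ((1 - 2*α)/(1 - α)) * (α/(1 - α))^l * Fb α k l := rfl

private lemma bracket {α : ℝ} (hα0 : 0 < α) (hα : α < 1/2) (m l : ℕ) :
    0 < Fb α (m+1) l ∧ Fb α (m+1) l < 1 ∧
      Fb α (m+1) l ≤ (2*α)^(m+1) * (2*(1-α))^((m+1)+l) * ((1-α)/(1-2*α)) := by
  have hβ : (0:ℝ) < 1 - α := by linarith
  have h2α : 2*α < 1 := by linarith
  have hαβ : α < 1 - α := by linarith
  have h12 : (1:ℝ) - 2*α ≠ 0 := by linarith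
  set K := (m+1) + l + 1 with hK
  set A := ∑ n ∈ range K, T α m n with hAdef
  have hTpos : ∀ n, 0 < T α m n := by
    intro n
    have hc : 0 < ((n + m).choose n : ℝ) := by
      exact_mod_cast Nat.choose_pos (Nat.le_add_right n m)
    exact mul_pos (mul_pos hc (pow_pos hα0 _)) (pow_pos hβ _)
  -- rewrite the finite part
  have hAeq : (∑ n ∈ range ((m+1) + l + 1),
      (Nat.choose (n + (m+1) - 1) n : ℝ) * α^(m+1) * (1 - α)^n) = A := by
    apply Finset.sum_congr rfl
    intro n _
    have h1 : n + (m+1) - 1 = n + m := by omega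
    rw [h1]; rfl
  -- rewrite the infinite part
  have hb1 : ∀ j : ℕ, (Nat.choose ((j + ((m+1) + l + 1)) + (m+1) - 1) (j + ((m+1) + l + 1)) : ℝ) *
      α^((j + ((m+1) + l + 1)) - l) * (1 - α)^((m+1) + l)
      = ((j + K + m).choose (j + K) : ℝ) * α ^ (j + m + 2) * (1 - α) ^ ((m+1) + l) := by
    intro j
    have h1 : (j + ((m+1) + l + 1)) + (m+1) - 1 = (j + K) + m := by omega
    have h2 : (j + ((m+1) + l + 1)) - l = j + m + 2 := by omega
    have h3 : j + ((m+1) + l + 1) = j + K := rfl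
    rw [h1, h2, h3]
  have hb2 : ∀ j : ℕ, ((j + K + m).choose (j + K) : ℝ) * α ^ (j + m + 2) * (1 - α) ^ ((m+1) + l)
      = T α m (j + K) * (α/(1-α))^(j+1) := by
    intro j
    show _ = ((j + K + m).choose (j + K) : ℝ) * α ^ (m + 1) * (1 - α) ^ (j + K) * (α/(1-α))^(j+1)
    have e1 : α ^ (j + m + 2) = α ^ (m+1) * α ^ (j+1) := by rw [← pow_add]; congr 1; omega
    have e2 : (1-α) ^ (j + K) = (1-α) ^ ((m+1)+l) * (1-α) ^ (j+1) := by
      rw [← pow_add]; congr 1; omega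
    rw [e1, e2, div_pow]
    field_simp
  have hT := hasSum_T hα0 hα m
  have hTail : HasSum (fun j => T α m (j + K)) (1 - A) := by
    refine (hasSum_nat_add_iff K).2 ?_
    rw [← hAdef, sub_add_cancel]; exact hT
  have hs0 : (0:ℝ) < α/(1-α) := div_pos hα0 hβ
  have hs1 : α/(1-α) < 1 := (div_lt_one hβ).2 hαβ
  have hbnn : ∀ j, 0 ≤ T α m (j + K) * (α/(1-α))^(j+1) :=
    fun j => mul_nonneg (hTpos _).le (pow_nonneg hs0.le _)
  have hble : ∀ j, T α m (j + K) * (α/(1-α))^(j+1) ≤ (α/(1-α)) * T α m (j + K) := by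
    intro j
    rw [mul_comm (α/(1-α))]
    apply mul_le_mul_of_nonneg_left _ (hTpos _).le
    calc (α/(1-α))^(j+1) = (α/(1-α)) * (α/(1-α))^j := by rw [pow_succ]; ring
    _ ≤ (α/(1-α)) * 1 := by
        exact mul_le_mul_of_nonneg_left (pow_le_one₀ hs0.le hs1.le) hs0.le
    _ = α/(1-α) := mul_one _
  have hbsum : Summable (fun j => T α m (j + K) * (α/(1-α))^(j+1)) :=
    Summable.of_nonneg_of_le hbnn hble (hTail.summable.mul_left _)
  have hTs : HasSum (fun j => (α/(1-α)) * T α m (j + K)) ((α/(1-α)) * (1 - A)) :=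
    hTail.mul_left _
  have hB_le : (∑' j, T α m (j + K) * (α/(1-α))^(j+1)) ≤ (α/(1-α)) * (1 - A) :=
    le_trans (Summable.tsum_le_tsum hble hbsum hTs.summable) hTs.tsum_eq.le
  have hB_nn : 0 ≤ ∑' j, T α m (j + K) * (α/(1-α))^(j+1) := tsum_nonneg hbnn
  have hA_pos : 0 < A := Finset.sum_pos (fun n _ => hTpos n) ⟨0, mem_range.2 (by omega)⟩
  have hA_lt : A < 1 := by
    have h0 : T α m (0 + K) ≤ 1 - A := le_hasSum hTail 0 (fun j _ => (hTpos _).le)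
    have := hTpos (0 + K)
    linarith
  have hFb : Fb α (m+1) l = A + ∑' j, T α m (j + K) * (α/(1-α))^(j+1) := by
    rw [Fb, hAeq]
    congr 1
    exact tsum_congr (fun j => (hb1 j).trans (hb2 j))
  refine ⟨?_, ?_, ?_⟩
  · rw [hFb]; linarith
  · rw [hFb]
    nlinarith [mul_pos (sub_pos.2 hs1) (sub_pos.2 hA_lt)]
  · -- geometric bound
    have h2β : (1:ℝ) ≤ 2*(1-α) := by linarith
    have hsum2 : HasSum (fun n : ℕ => ((n + m).choose n : ℝ) * (1/2) ^ n) (1/(1-1/2)^(m+1)) :=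
      negbin_hasSum m (by norm_num) (by norm_num)
    have hval : (1:ℝ)/(1-1/2)^(m+1) = 2^(m+1) := by
      rw [show (1:ℝ)-1/2 = 1/2 by norm_num, div_pow, one_pow]
      field_simp
    have hterm : ∀ n ∈ range K, T α m n ≤
        (α^(m+1) * (2*(1-α))^((m+1)+l)) * (((n + m).choose n : ℝ) * (1/2) ^ n) := by
      intro n hn
      rw [mem_range, hK] at hn
      obtain ⟨d, hd⟩ : ∃ d, (m+1)+l = n + d := ⟨(m+1)+l-n, by omega⟩
      have hbase : (2*(1-α)) * (1/2:ℝ) = 1-α := by ring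
      have e : (2*(1-α))^((m+1)+l) * (1/2:ℝ)^n = (1-α)^n * (2*(1-α))^d := by
        rw [hd, pow_add, mul_right_comm, ← mul_pow, hbase]
      have erw : (α^(m+1) * (2*(1-α))^((m+1)+l)) * (((n + m).choose n : ℝ) * (1/2) ^ n)
          = (((n + m).choose n : ℝ) * α^(m+1) * (1-α)^n) * (2*(1-α))^d := by
        linear_combination (((n + m).choose n : ℝ) * α^(m+1)) * e
      rw [erw]
      have h1p : (1:ℝ) ≤ (2*(1-α))^d := one_le_pow₀ h2β
      calc T α m n = T α m n * 1 := (mul_one _).symm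
        _ ≤ T α m n * (2*(1-α))^d := by
            exact mul_le_mul_of_nonneg_left h1p (hTpos n).le
        _ = (((n + m).choose n : ℝ) * α^(m+1) * (1-α)^n) * (2*(1-α))^d := rfl
    have hsum2' : HasSum (fun n : ℕ => (α^(m+1) * (2*(1-α))^((m+1)+l)) *
        (((n + m).choose n : ℝ) * (1/2) ^ n))
        ((α^(m+1) * (2*(1-α))^((m+1)+l)) * (1/(1-1/2)^(m+1))) := hsum2.mul_left _
    have hA_geo : A ≤ (2*α)^(m+1) * (2*(1-α))^((m+1)+l) := by
      have step1 : A ≤ ∑ n ∈ range K, (α^(m+1) * (2*(1-α))^((m+1)+l)) *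
          (((n + m).choose n : ℝ) * (1/2) ^ n) := Finset.sum_le_sum hterm
      have step2 : (∑ n ∈ range K, (α^(m+1) * (2*(1-α))^((m+1)+l)) *
          (((n + m).choose n : ℝ) * (1/2) ^ n)) ≤
          (α^(m+1) * (2*(1-α))^((m+1)+l)) * (1/(1-1/2)^(m+1)) := by
        rw [← hsum2'.tsum_eq]
        apply Summable.sum_le_tsum _ (fun i _ => ?_) hsum2'.summable
        positivity
      have step3 : (α^(m+1) * (2*(1-α))^((m+1)+l)) * (1/(1-1/2)^(m+1))
          = (2*α)^(m+1) * (2*(1-α))^((m+1)+l) := by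
        rw [hval, mul_pow 2 α (m+1)]; ring
      linarith
    -- bound on the tail sum
    have hb_le2 : ∀ j : ℕ, T α m (j + K) * (α/(1-α))^(j+1) ≤
        (((2*α)^(m+1) * (2*(1-α))^((m+1)+l)) * α) * (2*α)^j := by
      intro j
      refine le_of_eq_of_le (hb2 j).symm ?_
      have hcb : ((j + K + m).choose (j + K) : ℝ) ≤ 2^(j + K + m) := by
        exact_mod_cast choose_le_two_pow' (j + K + m) (j + K)
      calc ((j + K + m).choose (j + K) : ℝ) * α ^ (j + m + 2) * (1 - α) ^ ((m+1) + l)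
          ≤ (2:ℝ)^(j + K + m) * α ^ (j + m + 2) * (1 - α) ^ ((m+1) + l) := by
            exact mul_le_mul_of_nonneg_right
              (mul_le_mul_of_nonneg_right hcb (pow_nonneg hα0.le _)) (pow_nonneg hβ.le _)
        _ = (((2*α)^(m+1) * (2*(1-α))^((m+1)+l)) * α) * (2*α)^j := by
            rw [show j + K + m = (m+1) + ((m+1)+l) + j by omega, pow_add, pow_add,
              mul_pow 2 α (m+1), mul_pow 2 (1-α) ((m+1)+l), mul_pow 2 α j]
            ring
    have hgeo2 : HasSum (fun j : ℕ => (((2*α)^(m+1) * (2*(1-α))^((m+1)+l)) * α) * (2*α)^j)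
        ((((2*α)^(m+1) * (2*(1-α))^((m+1)+l)) * α) * (1 - 2*α)⁻¹) :=
      (hasSum_geometric_of_lt_one (by linarith) (by linarith)).mul_left _
    have hB_geo : (∑' j, T α m (j + K) * (α/(1-α))^(j+1)) ≤
        (((2*α)^(m+1) * (2*(1-α))^((m+1)+l)) * α) * (1 - 2*α)⁻¹ :=
      le_trans (Summable.tsum_le_tsum hb_le2 hbsum hgeo2.summable) hgeo2.tsum_eq.le
    rw [hFb]
    have efin : (2*α)^(m+1) * (2*(1-α))^((m+1)+l) +
        (((2*α)^(m+1) * (2*(1-α))^((m+1)+l)) * α) * (1 - 2*α)⁻¹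
        = (2*α)^(m+1) * (2*(1-α))^((m+1)+l) * ((1-α)/(1-2*α)) := by
      field_simp
      ring
    linarith

/-- For `0 < α < 1/2` and `k ≥ 1`, `0 < g(k,α) < 1`, and `g(k,α) → 0` as `k → ∞`. -/
theorem stmt_12 (α : ℝ) (hα0 : 0 < α) (hα : α < 1/2) :
    (∀ k : ℕ, 1 ≤ k → 0 < g k α ∧ g k α < 1) ∧
    Tendsto (fun k : ℕ => g k α) atTop (nhds 0) := by
  have hβ : (0:ℝ) < 1 - α := by linarith
  have h2α : 2*α < 1 := by linarith
  have hc0 : (0:ℝ) < (1 - 2*α)/(1 - α) := div_pos (by linarith) hβ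
  have hs0 : (0:ℝ) < α/(1-α) := div_pos hα0 hβ
  have hs1 : α/(1-α) < 1 := (div_lt_one hβ).2 (by linarith)
  set c : ℝ := (1 - 2*α)/(1 - α) with hc
  set s : ℝ := α/(1-α) with hs
  have hgeom : HasSum (fun l : ℕ => c * s^l) 1 := by
    have h := (hasSum_geometric_of_lt_one hs0.le hs1).mul_left c
    have hsc : (1:ℝ) - s = c := by
      rw [hc, hs]; field_simp; ring
    have : c * (1 - s)⁻¹ = 1 := by
      rw [hsc]; exact mul_inv_cancel₀ (ne_of_gt hc0)
    rwa [this] at h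
  -- main bounds for k ≥ 1
  have main : ∀ k : ℕ, 1 ≤ k → (0 < g k α ∧ g k α < 1) ∧
      g k α ≤ (c * (4*α*(1-α))^k * ((1-α)/(1-2*α))) * (1 - 2*α)⁻¹ := by
    intro k hk
    obtain ⟨m, rfl⟩ : ∃ m, k = m + 1 := ⟨k - 1, by omega⟩
    have hbr := fun l => bracket hα0 hα m l
    set f : ℕ → ℝ := fun l => c * s^l * Fb α (m+1) l with hf
    have hf_nonneg : ∀ l, 0 ≤ f l := fun l =>
      mul_nonneg (mul_nonneg hc0.le (pow_nonneg hs0.le _)) (hbr l).1.le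
    have hf_le : ∀ l, f l ≤ c * s^l := by
      intro l
      have h2 : (0:ℝ) ≤ c * s^l := mul_nonneg hc0.le (pow_nonneg hs0.le l)
      calc f l = c * s^l * Fb α (m+1) l := rfl
        _ ≤ c * s^l * 1 := mul_le_mul_of_nonneg_left (hbr l).2.1.le h2
        _ = c * s^l := mul_one _
    have hf_sum : Summable f :=
      Summable.of_nonneg_of_le hf_nonneg hf_le hgeom.summable
    have hg_eq : g (m+1) α = ∑' l, f l := g_eq (m+1) α
    constructor
    · constructor
      · rw [hg_eq]
        exact Summable.tsum_pos hf_sum hf_nonneg 0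
          (mul_pos (by simpa using hc0) (hbr 0).1)
      · rw [hg_eq]
        have hlt : f 0 < c * s^0 := by
          have : f 0 = c * s^0 * Fb α (m+1) 0 := rfl
          rw [this]
          calc c * s^0 * Fb α (m+1) 0 < c * s^0 * 1 :=
              mul_lt_mul_of_pos_left (hbr 0).2.1 (by simpa using hc0)
            _ = c * s^0 := mul_one _
        calc ∑' l, f l < ∑' l, c * s^l :=
          Summable.tsum_lt_tsum hf_le hlt hf_sum hgeom.summable
        _ = 1 := hgeom.tsum_eq
    · -- geometric decay bound
      have hf_le2 : ∀ l, f l ≤ (c * (4*α*(1-α))^(m+1) * ((1-α)/(1-2*α))) * (2*α)^l := by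
        intro l
        have h1 : f l ≤ c * s^l * ((2*α)^(m+1) * (2*(1-α))^((m+1)+l) * ((1-α)/(1-2*α))) :=
          mul_le_mul_of_nonneg_left (hbr l).2.2
            (mul_nonneg hc0.le (pow_nonneg hs0.le _))
        have e4 : (4*α*(1-α))^(m+1) = (2*α)^(m+1) * (2*(1-α))^(m+1) := by
          rw [← mul_pow]; congr 1; ring
        have e5 : s^l * (2*(1-α))^l = (2*α)^l := by
          rw [← mul_pow]; congr 1; rw [hs]; field_simp
        have h2 : c * s^l * ((2*α)^(m+1) * (2*(1-α))^((m+1)+l) * ((1-α)/(1-2*α)))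
            = (c * (4*α*(1-α))^(m+1) * ((1-α)/(1-2*α))) * (2*α)^l := by
          rw [pow_add (2*(1-α)) (m+1) l, e4]
          linear_combination (c * ((1-α)/(1-2*α)) * (2*α)^(m+1) * (2*(1-α))^(m+1)) * e5
        linarith
      have hgeo3 : HasSum (fun l : ℕ => (c * (4*α*(1-α))^(m+1) * ((1-α)/(1-2*α))) * (2*α)^l)
          ((c * (4*α*(1-α))^(m+1) * ((1-α)/(1-2*α))) * (1-2*α)⁻¹) :=
        (hasSum_geometric_of_lt_one (by linarith) (by linarith)).mul_left _
      rw [hg_eq]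
      exact le_trans (Summable.tsum_le_tsum hf_le2 hf_sum hgeo3.summable) hgeo3.tsum_eq.le
  refine ⟨fun k hk => (main k hk).1, ?_⟩
  have hq0 : (0:ℝ) ≤ 4*α*(1-α) := by positivity
  have hq1 : 4*α*(1-α) < 1 := by nlinarith [sq_nonneg (1 - 2*α)]
  have htend : Tendsto (fun k : ℕ => (c * (4*α*(1-α))^k * ((1-α)/(1-2*α))) * (1 - 2*α)⁻¹)
      atTop (nhds 0) := by
    have h := tendsto_pow_atTop_nhds_zero_of_lt_one hq0 hq1
    have := (h.const_mul c).mul_const (((1-α)/(1-2*α)) * (1 - 2*α)⁻¹)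
    simpa [mul_assoc] using this
  apply squeeze_zero' ?_ ?_ htend
  · filter_upwards with k
    rw [g_eq]
    apply tsum_nonneg
    intro l
    apply mul_nonneg (mul_nonneg hc0.le (pow_nonneg hs0.le _))
    rw [Fb]
    apply add_nonneg
    · apply Finset.sum_nonneg
      intro n _
      positivity
    · apply tsum_nonneg
      intro j
      positivity
  · filter_upwards [eventually_ge_atTop 1] with k hk
    exact (main k hk).2
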